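/- Under the same setup, the second moment of the estimator is bounded: Σᵢ (|wᵢ| m² / |vᵢ|)² p(i) ≤ (1+7ζ)², hence the variance of each of the real and imaginary parts of the estimator X (which takes value wᵢm²/vᵢ with probability p(i)) is at most (1+7ζ)². -/

import Mathlib

open BigOperators

/-- Second-moment and variance bound for the importance-sampling
estimator `X` taking value `wᵢm²/vᵢ` with probability `p(i)` (value `0` when
`vᵢ = 0`): the second moment is at most `(1+7ζ)²`, hence the variances of the
real and imaginary parts are at most `(1+7ζ)²`. -/
theorem importance_sampling_variance {N : ℕ} (v w : Fin N → ℂ) (m ζ : ℝ) (p : Fin N → ℝ)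
    (hζ0 : 0 ≤ ζ) (hζ1 : ζ < 1) (hm : 0 < m)
    (hv : ∑ i, ‖v i‖ ^ 2 ≤ 1) (hw : ∑ i, ‖w i‖ ^ 2 ≤ 1)
    (hsupp : ∀ i, v i = 0 → w i = 0)
    (hp0 : ∀ i, 0 ≤ p i) (hpsum : ∑ i, p i = 1)
    (hpb : ∀ i, m ^ 2 * p i ≤ (1 + 7 * ζ) * ‖v i‖ ^ 2)
    (hmv : m ≤ (1 + ζ) * Real.sqrt (∑ i, ‖v i‖ ^ 2)) :
    (∑ i, p i * ‖if v i = 0 then (0 : ℂ) else w i * (m : ℂ) ^ 2 / v i‖ ^ 2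
        ≤ (1 + 7 * ζ) ^ 2) ∧
    (∑ i, p i * ((if v i = 0 then (0 : ℂ) else w i * (m : ℂ) ^ 2 / v i).re) ^ 2
        - (∑ i, p i * (if v i = 0 then (0 : ℂ) else w i * (m : ℂ) ^ 2 / v i).re) ^ 2
        ≤ (1 + 7 * ζ) ^ 2) ∧
    (∑ i, p i * ((if v i = 0 then (0 : ℂ) else w i * (m : ℂ) ^ 2 / v i).im) ^ 2
        - (∑ i, p i * (if v i = 0 then (0 : ℂ) else w i * (m : ℂ) ^ 2 / v i).im) ^ 2
        ≤ (1 + 7 * ζ) ^ 2) := by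
  set X : Fin N → ℂ := fun i => if v i = 0 then (0 : ℂ) else w i * (m : ℂ) ^ 2 / v i with hX
  have hζ7 : (0:ℝ) ≤ 1 + 7 * ζ := by linarith
  -- m² ≤ 1 + 7ζ
  have hsq : Real.sqrt (∑ i, ‖v i‖ ^ 2) ≤ 1 := by
    rw [show (1:ℝ) = Real.sqrt 1 by simp]
    exact Real.sqrt_le_sqrt hv
  have hm1 : m ≤ 1 + ζ := le_trans hmv (by nlinarith [Real.sqrt_nonneg (∑ i, ‖v i‖ ^ 2)])
  have hm2 : m ^ 2 ≤ 1 + 7 * ζ := by nlinarith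
  -- termwise bound
  have hterm : ∀ i, p i * ‖X i‖ ^ 2 ≤ (1 + 7 * ζ) * m ^ 2 * ‖w i‖ ^ 2 := by
    intro i
    by_cases h : v i = 0
    · have hx0 : X i = 0 := if_pos h
      rw [hx0, norm_zero]
      have h0 : ((0:ℝ)) ^ 2 = 0 := by norm_num
      rw [h0, mul_zero]
      exact mul_nonneg (mul_nonneg hζ7 (sq_nonneg m)) (sq_nonneg _)
    · have hvpos : (0:ℝ) < ‖v i‖ ^ 2 := pow_pos (norm_pos_iff.mpr h) 2
      have : ‖X i‖ ^ 2 = ‖w i‖ ^ 2 * m ^ 2 * m ^ 2 / ‖v i‖ ^ 2 := by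
        have hxi : X i = w i * (m : ℂ) ^ 2 / v i := if_neg h
        rw [hxi, norm_div, norm_mul, norm_pow, Complex.norm_real,
          Real.norm_eq_abs, abs_of_pos hm, div_pow, mul_pow]
        ring
      rw [this]
      calc p i * (‖w i‖ ^ 2 * m ^ 2 * m ^ 2 / ‖v i‖ ^ 2)
          = (m ^ 2 * p i) * (‖w i‖ ^ 2 * m ^ 2 / ‖v i‖ ^ 2) := by ring
        _ ≤ ((1 + 7 * ζ) * ‖v i‖ ^ 2) * (‖w i‖ ^ 2 * m ^ 2 / ‖v i‖ ^ 2) := by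
            apply mul_le_mul_of_nonneg_right (hpb i)
            positivity
        _ = (1 + 7 * ζ) * ((‖v i‖ ^ 2) * (‖w i‖ ^ 2 * m ^ 2 / ‖v i‖ ^ 2)) := by ring
        _ = (1 + 7 * ζ) * m ^ 2 * ‖w i‖ ^ 2 := by
            rw [mul_div_assoc', mul_div_cancel_left₀ _ (ne_of_gt hvpos)]; ring
  have hmain : ∑ i, p i * ‖X i‖ ^ 2 ≤ (1 + 7 * ζ) ^ 2 := by
    calc ∑ i, p i * ‖X i‖ ^ 2 ≤ ∑ i, (1 + 7 * ζ) * m ^ 2 * ‖w i‖ ^ 2 :=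
          Finset.sum_le_sum fun i _ => hterm i
      _ = (1 + 7 * ζ) * m ^ 2 * ∑ i, ‖w i‖ ^ 2 := by rw [Finset.mul_sum]
      _ ≤ (1 + 7 * ζ) * (1 + 7 * ζ) * 1 := by
          apply mul_le_mul (by nlinarith) hw (by positivity) (by positivity)
      _ = (1 + 7 * ζ) ^ 2 := by ring
  have hre : ∑ i, p i * (X i).re ^ 2 ≤ ∑ i, p i * ‖X i‖ ^ 2 := by
    apply Finset.sum_le_sum
    intro i _
    apply mul_le_mul_of_nonneg_left _ (hp0 i)
    rw [Complex.sq_norm, Complex.normSq_apply]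
    nlinarith [sq_nonneg (X i).im]
  have him : ∑ i, p i * (X i).im ^ 2 ≤ ∑ i, p i * ‖X i‖ ^ 2 := by
    apply Finset.sum_le_sum
    intro i _
    apply mul_le_mul_of_nonneg_left _ (hp0 i)
    rw [Complex.sq_norm, Complex.normSq_apply]
    nlinarith [sq_nonneg (X i).re]
  refine ⟨hmain, ?_, ?_⟩
  · nlinarith [sq_nonneg (∑ i, p i * (X i).re)]
  · nlinarith [sq_nonneg (∑ i, p i * (X i).im)]
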